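/- Let J be a real d×M matrix, W ⊆ ℝ^M a nonempty convex set, β > 0, w, u ∈ W, and B ≥ 0. Let G̃ : Ω → ℝ^{M×M} be an integrable random matrix with E[G̃] = Jᵀ J and E‖G̃ w‖² ≤ B. Let w⁺ : Ω → W be a random vector such that almost surely w⁺ satisfies the variational characterization of the Euclidean projection of w − β·G̃ w onto W, i.e., ⟨(w − β·G̃ w) − w⁺, v − w⁺⟩ ≤ 0 for all v ∈ W. Then ⟨J(w − u), J w⟩ ≤ (‖w − u‖² − E‖w⁺ − u‖²)/(2β) + (β/2)·B. -/

import Mathlib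

open MeasureTheory
open scoped BigOperators Matrix

/-- Euclidean norm of a vector in `ℝ^n`. -/
noncomputable def eNorm {n : ℕ} (v : Fin n → ℝ) : ℝ :=
  Real.sqrt (∑ i, v i ^ 2)

/-- Euclidean inner product of two vectors in `ℝ^n`. -/
def eInner {n : ℕ} (v u : Fin n → ℝ) : ℝ :=
  ∑ i, v i * u i

lemma eNorm_sq {n : ℕ} (v : Fin n → ℝ) : eNorm v ^ 2 = ∑ i, v i ^ 2 :=
  Real.sq_sqrt (Finset.sum_nonneg fun _ _ => sq_nonneg _)

lemma jtj_inner {d M : ℕ} (J : Matrix (Fin d) (Fin M) ℝ) (x y : Fin M → ℝ) :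
    eInner ((Jᵀ * J).mulVec x) y = eInner (J.mulVec y) (J.mulVec x) := by
  have h1 : eInner ((Jᵀ * J).mulVec x) y = dotProduct ((Jᵀ * J).mulVec x) y := rfl
  have h2 : eInner (J.mulVec y) (J.mulVec x)
      = dotProduct (J.mulVec y) (J.mulVec x) := rfl
  rw [h1, h2, ← Matrix.mulVec_mulVec, Matrix.mulVec_transpose, ← Matrix.dotProduct_mulVec,
    dotProduct_comm]


/-- Let `J` be a real `d × M` matrix, `W ⊆ ℝ^M` a nonempty convex set,
`β > 0`, `w, u ∈ W`, `B ≥ 0`. Let `G̃` be an integrable random `M × M` matrix with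
`E[G̃] = Jᵀ J` (entrywise) and `E‖G̃ w‖² ≤ B`, and let `w⁺` be a random point of `W` that
almost surely satisfies the variational characterization of the Euclidean projection of
`w − β·G̃ w` onto `W`. Then
`⟨J(w − u), J w⟩ ≤ (‖w − u‖² − E‖w⁺ − u‖²)/(2β) + (β/2)·B`. -/
theorem stmt13 {Ω : Type*} [MeasurableSpace Ω] (μ : Measure Ω) [IsProbabilityMeasure μ]
    {d M : ℕ} (J : Matrix (Fin d) (Fin M) ℝ)
    (W : Set (Fin M → ℝ)) (hWne : W.Nonempty) (hWconv : Convex ℝ W)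
    {β : ℝ} (hβ : 0 < β) (w u : Fin M → ℝ) (hw : w ∈ W) (hu : u ∈ W)
    {B : ℝ} (hB : 0 ≤ B)
    (Gt : Ω → Matrix (Fin M) (Fin M) ℝ)
    (hGtInt : ∀ a b, Integrable (fun ω => Gt ω a b) μ)
    (hGtmean : ∀ a b, ∫ ω, Gt ω a b ∂μ = (Jᵀ * J) a b)
    (hGtSqInt : Integrable (fun ω => eNorm ((Gt ω).mulVec w) ^ 2) μ)
    (hGtvar : ∫ ω, eNorm ((Gt ω).mulVec w) ^ 2 ∂μ ≤ B)
    (wplus : Ω → (Fin M → ℝ)) (hwplusmeas : Measurable wplus)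
    (hwplusW : ∀ ω, wplus ω ∈ W)
    (hproj : ∀ᵐ ω ∂μ, ∀ v ∈ W,
      eInner ((w - β • (Gt ω).mulVec w) - wplus ω) (v - wplus ω) ≤ 0) :
    eInner (J.mulVec (w - u)) (J.mulVec w) ≤
      (eNorm (w - u) ^ 2 - ∫ ω, eNorm (wplus ω - u) ^ 2 ∂μ) / (2 * β) + (β / 2) * B := by
  classical
  set g : Ω → Fin M → ℝ := fun ω => (Gt ω).mulVec w with hgdef
  set A : ℝ := eNorm (w - u) ^ 2 with hA
  set I : ℝ := eInner (J.mulVec (w - u)) (J.mulVec w) with hIdef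
  -- pointwise a.s. inequality
  have hpt : ∀ᵐ ω ∂μ, eNorm (wplus ω - u) ^ 2 ≤
      A - 2 * β * eInner (g ω) (w - u) + β ^ 2 * eNorm (g ω) ^ 2 := by
    filter_upwards [hproj] with ω hω
    have key := hω u hu
    have hid : ∀ a p : Fin M → ℝ,
        (∑ i, (p i - u i) ^ 2)
          = (∑ i, (a i - u i) ^ 2) - (∑ i, (a i - p i) ^ 2)
            + 2 * (∑ i, (a i - p i) * (u i - p i)) := by
      intro a p
      rw [Finset.mul_sum, ← Finset.sum_sub_distrib, ← Finset.sum_add_distrib]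
      exact Finset.sum_congr rfl fun i _ => by ring
    set a : Fin M → ℝ := fun i => w i - β * g ω i with hadef
    have hkey' : (∑ i, (a i - wplus ω i) * (u i - wplus ω i)) ≤ 0 := by
      have : eInner ((w - β • g ω) - wplus ω) (u - wplus ω)
          = ∑ i, (a i - wplus ω i) * (u i - wplus ω i) := by
        simp [eInner, hadef, Pi.sub_apply, Pi.smul_apply, smul_eq_mul]
      rw [← this]; exact key
    have h1 : eNorm (wplus ω - u) ^ 2 ≤ ∑ i, (a i - u i) ^ 2 := by
      rw [eNorm_sq]
      have := hid a (wplus ω)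
      simp only [Pi.sub_apply]
      rw [this]
      have hnn : 0 ≤ ∑ i, (a i - wplus ω i) ^ 2 :=
        Finset.sum_nonneg fun _ _ => sq_nonneg _
      nlinarith [hkey']
    have h2 : (∑ i, (a i - u i) ^ 2)
        = A - 2 * β * eInner (g ω) (w - u) + β ^ 2 * eNorm (g ω) ^ 2 := by
      rw [hA, eNorm_sq, eNorm_sq]
      simp only [eInner, Pi.sub_apply, hadef]
      rw [Finset.mul_sum, Finset.mul_sum, ← Finset.sum_sub_distrib, ← Finset.sum_add_distrib]
      exact Finset.sum_congr rfl fun i _ => by ring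
    linarith [h1, h2 ▸ h1]
  -- integrability of eInner (g ω) (w-u)
  have hIntInner : Integrable (fun ω => eInner (g ω) (w - u)) μ := by
    have : (fun ω => eInner (g ω) (w - u))
        = fun ω => ∑ i, ∑ j, Gt ω i j * (w j * (w i - u i)) := by
      funext ω
      simp only [eInner, hgdef, Matrix.mulVec, dotProduct, Pi.sub_apply,
        Finset.sum_mul]
      exact Finset.sum_congr rfl fun i _ => Finset.sum_congr rfl fun j _ => by ring
    rw [this]
    exact integrable_finset_sum _ fun i _ =>
      integrable_finset_sum _ fun j _ => (hGtInt i j).mul_const _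
  have hMeanInner : ∫ ω, eInner (g ω) (w - u) ∂μ = I := by
    have hrw : (fun ω => eInner (g ω) (w - u))
        = fun ω => ∑ i, ∑ j, Gt ω i j * (w j * (w i - u i)) := by
      funext ω
      simp only [eInner, hgdef, Matrix.mulVec, dotProduct, Pi.sub_apply,
        Finset.sum_mul]
      exact Finset.sum_congr rfl fun i _ => Finset.sum_congr rfl fun j _ => by ring
    rw [hrw]
    rw [integral_finset_sum _ fun i _ =>
      integrable_finset_sum _ fun j _ => (hGtInt i j).mul_const _]
    have : ∀ i ∈ Finset.univ, (∫ ω, ∑ j, Gt ω i j * (w j * (w i - u i)) ∂μ)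
        = ∑ j, (Jᵀ * J) i j * (w j * (w i - u i)) := by
      intro i _
      rw [integral_finset_sum _ fun j _ => (hGtInt i j).mul_const _]
      exact Finset.sum_congr rfl fun j _ => by rw [integral_mul_const, hGtmean]
    rw [Finset.sum_congr rfl this, hIdef, ← jtj_inner J w (w - u)]
    simp only [eInner, Matrix.mulVec, dotProduct, Pi.sub_apply, Finset.sum_mul]
    exact Finset.sum_congr rfl fun i _ => Finset.sum_congr rfl fun j _ => by ring
  -- integrability of eNorm (wplus - u)^2
  have hmeasP : AEStronglyMeasurable (fun ω => eNorm (wplus ω - u) ^ 2) μ := by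
    apply Measurable.aestronglyMeasurable
    apply Measurable.pow_const
    apply Measurable.sqrt
    exact Finset.measurable_sum _ fun i _ =>
      (((hwplusmeas.eval (a := i)).sub measurable_const)).pow_const 2
  have hIntP : Integrable (fun ω => eNorm (wplus ω - u) ^ 2) μ := by
    apply Integrable.mono'
      (((hIntInner.const_mul (-(2*β))).add (integrable_const A)).add (hGtSqInt.const_mul (β ^ 2)))
      hmeasP
    filter_upwards [hpt] with ω hω
    rw [Real.norm_of_nonneg (by rw [eNorm_sq]; exact Finset.sum_nonneg fun _ _ => sq_nonneg _)]
    calc eNorm (wplus ω - u) ^ 2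
        ≤ A - 2 * β * eInner (g ω) (w - u) + β ^ 2 * eNorm (g ω) ^ 2 := hω
      _ = (-(2*β) * eInner (g ω) (w - u) + A) + β ^ 2 * eNorm (g ω) ^ 2 := by ring
  -- integrate
  have hb1 : Integrable (fun ω => -(2 * β) * eInner (g ω) (w - u) + A) μ :=
    (hIntInner.const_mul (-(2 * β))).add (integrable_const A)
  have hb2 : Integrable (fun ω => β ^ 2 * eNorm ((Gt ω).mulVec w) ^ 2) μ :=
    hGtSqInt.const_mul (β ^ 2)
  have hint : ∫ ω, eNorm (wplus ω - u) ^ 2 ∂μ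
      ≤ A - 2 * β * I + β ^ 2 * (∫ ω, eNorm ((Gt ω).mulVec w) ^ 2 ∂μ) := by
    have hmono : ∫ ω, eNorm (wplus ω - u) ^ 2 ∂μ
        ≤ ∫ ω, ((-(2 * β) * eInner (g ω) (w - u) + A)
            + β ^ 2 * eNorm ((Gt ω).mulVec w) ^ 2) ∂μ := by
      apply integral_mono_ae hIntP (hb1.add hb2)
      filter_upwards [hpt] with ω hω
      show eNorm (wplus ω - u) ^ 2 ≤ _
      calc eNorm (wplus ω - u) ^ 2
          ≤ A - 2 * β * eInner (g ω) (w - u) + β ^ 2 * eNorm (g ω) ^ 2 := hω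
        _ = (-(2 * β) * eInner (g ω) (w - u) + A)
            + β ^ 2 * eNorm ((Gt ω).mulVec w) ^ 2 := by rw [hgdef]; ring
    rw [integral_add hb1 hb2,
      integral_add (hIntInner.const_mul (-(2 * β))) (integrable_const A),
      integral_const_mul, integral_const_mul, hMeanInner, integral_const] at hmono
    simp only [measure_univ, ENNReal.toReal_one, probReal_univ, smul_eq_mul, one_mul] at hmono
    linarith
  have hV : ∫ ω, eNorm ((Gt ω).mulVec w) ^ 2 ∂μ ≤ B := hGtvar
  have h2βI : 2 * β * I ≤ A - (∫ ω, eNorm (wplus ω - u) ^ 2 ∂μ) + β ^ 2 * B := by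
    nlinarith [hint, hV, sq_nonneg β, hβ]
  have hP := hint
  have hgoal : (A - ∫ ω, eNorm (wplus ω - u) ^ 2 ∂μ) / (2 * β) + (β / 2) * B
      = (A - (∫ ω, eNorm (wplus ω - u) ^ 2 ∂μ) + β ^ 2 * B) / (2 * β) := by
    field_simp
  rw [hgoal, le_div_iff₀ (by positivity : (0:ℝ) < 2 * β)]
  nlinarith [h2βI]
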